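/- Let G10 be the interlacement graph of the matching { {0,3}, {1,10}, {2,9}, {4,15}, {5,16}, {6,19}, {7,14}, {8,13}, {11,18}, {12,17} } of {0,...,19}, with vertex set {0,...,9} where vertex i corresponds to the i-th chord in the listed order and vertices i, j are adjacent if and only if the corresponding chords are interlaced. Then G10 is connected, every vertex of G10 has even degree, G10 satisfies conditions C2 and B3, and yet G10 fails the STZ condition (there is no diagonal matrix Λ over GF(2) such that M + Λ is idempotent, where M is the adjacency matrix of G10 over GF(2)). -/

import Mathlib

/-- Two sorted pairs (chords) are interlaced. -/
def Interlaced (p q : ℕ × ℕ) : Prop :=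
  (p.1 < q.1 ∧ q.1 < p.2 ∧ p.2 < q.2) ∨ (q.1 < p.1 ∧ p.1 < q.2 ∧ q.2 < p.2)

/-- Interlacement graph of a tuple of chords: vertex `i` corresponds to the `i`-th chord,
and two vertices are adjacent iff the corresponding chords are interlaced. -/
def interGraph {n : ℕ} (c : Fin n → ℕ × ℕ) : SimpleGraph (Fin n) where
  Adj i j := i ≠ j ∧ Interlaced (c i) (c j)
  symm := ⟨fun _ _ h => ⟨h.1.symm, Or.symm h.2⟩⟩
  loopless := ⟨fun _ h => h.1 rfl⟩

/-- Condition C1: every vertex has even degree. -/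
def CondC1 {V : Type*} (G : SimpleGraph V) : Prop :=
  ∀ v : V, Even (G.neighborSet v).ncard

/-- Condition C2: each pair of distinct non-adjacent vertices has an even number
(possibly zero) of common neighbours. -/
def CondC2 {V : Type*} (G : SimpleGraph V) : Prop :=
  ∀ u v : V, u ≠ v → ¬ G.Adj u v → Even {w | G.Adj u w ∧ G.Adj v w}.ncard

/-- Condition B3 (Biryukov): for any three pairwise adjacent vertices `a`, `b`, `c`,
the number of vertices `w ∉ {b, c}` adjacent to `a` but to neither `b` nor `c`, plus
the number of vertices `w ≠ a` adjacent to both `b` and `c` but not to `a`, is even. -/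
def CondB3 {V : Type*} (G : SimpleGraph V) : Prop :=
  ∀ a b c : V, G.Adj a b → G.Adj a c → G.Adj b c →
    Even ({w | w ≠ b ∧ w ≠ c ∧ G.Adj a w ∧ ¬ G.Adj b w ∧ ¬ G.Adj c w}.ncard +
          {w | w ≠ a ∧ ¬ G.Adj a w ∧ G.Adj b w ∧ G.Adj c w}.ncard)

open Classical in
/-- Adjacency matrix of a simple graph over `GF(2) = ZMod 2`. -/
noncomputable def adjMat2 {V : Type*} (G : SimpleGraph V) : Matrix V V (ZMod 2) :=
  Matrix.of fun i j => if G.Adj i j then 1 else 0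

/-- The Shtylla–Traldi–Zulli condition: there is a diagonal matrix `Λ` over `GF(2)`
such that `M + Λ` is idempotent, where `M` is the adjacency matrix over `GF(2)`. -/
def CondSTZ {V : Type*} [Fintype V] [DecidableEq V] (G : SimpleGraph V) : Prop :=
  ∃ d : V → ZMod 2,
    (adjMat2 G + Matrix.diagonal d) * (adjMat2 G + Matrix.diagonal d)
      = adjMat2 G + Matrix.diagonal d

/-- The chords of the matching `{{0,3},{1,10},{2,9},{4,15},{5,16},{6,19},{7,14},{8,13},{11,18},{12,17}}`
of `{0, ..., 19}`, in the listed order. -/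
def L10chords : Fin 10 → ℕ × ℕ :=
  ![(0, 3), (1, 10), (2, 9), (4, 15), (5, 16), (6, 19), (7, 14), (8, 13), (11, 18), (12, 17)]

/-- The interlacement graph of that matching. -/
def G10 : SimpleGraph (Fin 10) := interGraph L10chords

instance instDecInterlaced (p q : ℕ × ℕ) : Decidable (Interlaced p q) :=
  decidable_of_iff ((p.1 < q.1 ∧ q.1 < p.2 ∧ p.2 < q.2) ∨ (q.1 < p.1 ∧ p.1 < q.2 ∧ q.2 < p.2))
    Iff.rfl

instance instDecG10Adj : DecidableRel G10.Adj := fun i j =>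
  decidable_of_iff (i ≠ j ∧ Interlaced (L10chords i) (L10chords j)) Iff.rfl

lemma ncard_setOf_eq {n : ℕ} (p : Fin n → Prop) [DecidablePred p] :
    {x | p x}.ncard = (Finset.univ.filter p).card := by
  rw [Set.ncard_eq_toFinset_card']
  simp [Set.toFinset_setOf]

/-- computable copy of the adjacency matrix -/
def M10 : Matrix (Fin 10) (Fin 10) (ZMod 2) :=
  Matrix.of fun i j => if G10.Adj i j then 1 else 0

lemma adjMat2_G10 : adjMat2 G10 = M10 := by
  ext i j
  by_cases h : G10.Adj i j <;> simp [adjMat2, M10, h]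

set_option maxRecDepth 8000 in
set_option maxHeartbeats 2000000 in
/-- `G10` is connected, has all degrees even, satisfies C2 and B3, but fails the STZ
condition. -/
theorem G10_counterexample :
    G10.Connected ∧ CondC1 G10 ∧ CondC2 G10 ∧ CondB3 G10 ∧ ¬ CondSTZ G10 := by
  have key : ∀ v : Fin 10, G10.Reachable 1 v := by
    intro v
    have r3 : G10.Reachable 1 3 := (by decide : G10.Adj 1 3).reachable
    fin_cases v
    · exact (by decide : G10.Adj 1 0).reachable
    · exact SimpleGraph.Reachable.refl _
    · exact ((by decide : G10.Adj 1 0).reachable).trans (by decide : G10.Adj 0 2).reachable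
    · exact r3
    · exact (by decide : G10.Adj 1 4).reachable
    · exact (by decide : G10.Adj 1 5).reachable
    · exact (by decide : G10.Adj 1 6).reachable
    · exact (by decide : G10.Adj 1 7).reachable
    · exact r3.trans (by decide : G10.Adj 3 8).reachable
    · exact r3.trans (by decide : G10.Adj 3 9).reachable
  refine ⟨⟨fun u v => (key u).symm.trans (key v)⟩, ?_, ?_, ?_, ?_⟩
  · intro v
    rw [show G10.neighborSet v = {w | G10.Adj v w} from rfl, ncard_setOf_eq]
    revert v; decide
  · intro u v h1 h2
    rw [ncard_setOf_eq]
    revert h2; revert h1; revert v; revert u; decide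
  · intro a
    fin_cases a <;>
    · intro b c h1 h2 h3
      rw [ncard_setOf_eq, ncard_setOf_eq]
      revert h3; revert h2; revert h1; revert c; revert b
      decide
  · rw [CondSTZ, adjMat2_G10]
    rintro ⟨d, hd⟩
    have h13 := congr_fun (congr_fun hd 1) 3
    have h39 := congr_fun (congr_fun hd 3) 9
    have h97 := congr_fun (congr_fun hd 9) 7
    have h71 := congr_fun (congr_fun hd 7) 1
    simp only [Matrix.mul_apply, Matrix.add_apply, Matrix.diagonal_apply, Matrix.of_apply, M10,
      Fin.sum_univ_succ, Fin.sum_univ_zero, Fin.isValue] at h13 h39 h97 h71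
    norm_num (config := { decide := true }) [] at h13 h39 h97 h71
    simp only [show (Fin.succ 2 : Fin 10) = 3 by rfl,
      show ((Fin.succ 2).succ.succ.succ.succ : Fin 10) = 7 by rfl,
      show ((Fin.succ 2).succ.succ.succ.succ.succ.succ : Fin 10) = 9 by rfl] at h13 h39 h97 h71
    exact (by decide : ∀ a b c e : ZMod 2,
      a + (b + 2) = 1 → b + (1 + e) = 1 → c + e = 1 → a + c = 1 → False)
      (d 1) (d 3) (d 7) (d 9) h13 h39 h97 h71
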